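/- Let α, β ∈ ℂ_I^n for a fixed imaginary unit quaternion I (i.e., each component lies in the real plane spanned by 1 and I). Define g(J) = Σₜ |αₜ + Jβₜ|² for imaginary unit quaternions J. Then g(J) is an affine function of u, where u is the coefficient of I in the orthogonal decomposition J = uI + w. Consequently, the maximum of g over all imaginary units J is attained at J = I or J = -I, and likewise the minimum is attained at J = I or J = -I. -/

import Mathlib

open Finset

local notation "ℍ" => Quaternion ℝ

private lemma norm_of_sq_neg_one (J : ℍ) (h : J ^ 2 = -1) : ‖J‖ = 1 := by
  have h1 : ‖J‖ ^ 2 = 1 := by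
    have := congrArg norm h
    rw [norm_pow] at this
    simpa using this
  nlinarith [norm_nonneg J]

private lemma re_of_sq_neg_one (J : ℍ) (h : J ^ 2 = -1) : J.re = 0 := by
  rw [sq] at h
  have h1 := congrArg QuaternionAlgebra.re h
  have h2 := congrArg QuaternionAlgebra.imI h
  have h3 := congrArg QuaternionAlgebra.imJ h
  have h4 := congrArg QuaternionAlgebra.imK h
  simp [Quaternion.re_mul, Quaternion.imI_mul, Quaternion.imJ_mul, Quaternion.imK_mul, Quaternion.re_one, Quaternion.imI_one, Quaternion.imJ_one, Quaternion.imK_one] at h1 h2 h3 h4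
  have key : J.re ^ 4 + J.re ^ 2 = 0 := by nlinarith [h1, h2, h3, h4]
  nlinarith [sq_nonneg J.re, sq_nonneg (J.re ^ 2)]

private lemma inner_mul_right (a b J : ℍ) :
    @inner ℝ _ _ a (J * b) = @inner ℝ _ _ (a * star b) J := by
  rw [Quaternion.inner_def, Quaternion.inner_def, star_mul, ← mul_assoc]

/-- For `α, β ∈ ℂ_I^n`, the function `g(J) = Σₜ |αₜ + Jβₜ|²` over imaginary
unit quaternions `J` is an affine function of the coefficient `u` of `I` in the orthogonal
decomposition `J = u • I + w`; consequently its maximum over all imaginary units is attained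
at `J = I` or `J = -I`, and likewise its minimum. -/
theorem stmt3 (n : ℕ) (I : Quaternion ℝ) (hI : I ^ 2 = -1)
    (α β : Fin n → Quaternion ℝ)
    (hα : ∀ t, ∃ x y : ℝ, α t = (x : Quaternion ℝ) + (y : Quaternion ℝ) * I)
    (hβ : ∀ t, ∃ x y : ℝ, β t = (x : Quaternion ℝ) + (y : Quaternion ℝ) * I)
    (g : Quaternion ℝ → ℝ)
    (hg : ∀ J, g J = ∑ t, ‖α t + J * β t‖ ^ 2) :
    (∃ c d : ℝ, ∀ (J w : Quaternion ℝ) (u : ℝ), J ^ 2 = -1 → J = u • I + w →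
        @inner ℝ _ _ w (1 : Quaternion ℝ) = 0 → @inner ℝ _ _ w I = 0 →
        g J = c - d * u) ∧
    (∀ J : Quaternion ℝ, J ^ 2 = -1 →
        g J ≤ max (g I) (g (-I)) ∧ min (g I) (g (-I)) ≤ g J) := by
  have hInorm : ‖I‖ = 1 := norm_of_sq_neg_one I hI
  set c : ℝ := ∑ t, (‖α t‖ ^ 2 + ‖β t‖ ^ 2) with hc
  set d : ℝ := -(2 * ∑ t, @inner ℝ _ _ (α t) (I * β t)) with hd
  -- q t lies in span{1, I}
  have hq : ∀ t, ∃ x y : ℝ, α t * star (β t)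
      = (x : Quaternion ℝ) + (y : Quaternion ℝ) * I := by
    intro t
    obtain ⟨x1, y1, h1⟩ := hα t
    obtain ⟨x2, y2, h2⟩ := hβ t
    refine ⟨x1 * x2 + y1 * y2, y1 * x2 - x1 * y2, ?_⟩
    have hstar : star I = -I := by
      have hre := re_of_sq_neg_one I hI
      ext <;> simp [hre]
    have hII : I * I = -1 := by rw [← sq, hI]
    rw [h1, h2, star_add, star_mul, hstar, Quaternion.star_coe]
    simp only [mul_add, add_mul, mul_neg, neg_mul, sub_mul, Quaternion.star_coe,
      Quaternion.coe_mul_eq_smul, Quaternion.mul_coe_eq_smul, smul_mul_assoc,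
      mul_smul_comm, hII, smul_neg, smul_smul, Quaternion.coe_add,
      Quaternion.coe_sub, Quaternion.coe_mul]
    have hco : ∀ r : ℝ, (r : ℍ) = r • (1 : ℍ) := fun r => by
      rw [← Quaternion.coe_mul_eq_smul, mul_one]
    simp only [hco]
    module
  -- the affine formula
  have main : ∀ (J w : Quaternion ℝ) (u : ℝ), J ^ 2 = -1 → J = u • I + w →
      @inner ℝ _ _ w (1 : Quaternion ℝ) = 0 → @inner ℝ _ _ w I = 0 →
      g J = c - d * u := by
    intro J w u hJ hdec hw1 hwI
    have hJnorm : ‖J‖ = 1 := norm_of_sq_neg_one J hJ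
    have step : ∀ t, @inner ℝ _ _ (α t) (J * β t)
        = u * @inner ℝ _ _ (α t) (I * β t) := by
      intro t
      obtain ⟨x, y, hxy⟩ := hq t
      rw [inner_mul_right, inner_mul_right, hdec, inner_add_right, real_inner_smul_right]
      have hzero : @inner ℝ _ _ (α t * star (β t)) w = 0 := by
        rw [hxy, inner_add_left]
        have e1 : ((x : Quaternion ℝ)) = x • (1 : Quaternion ℝ) := by
          rw [← Quaternion.coe_mul_eq_smul, mul_one]
        have e2 : ((y : Quaternion ℝ)) * I = y • I := Quaternion.coe_mul_eq_smul y I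
        have hw1' : @inner ℝ _ _ (1 : Quaternion ℝ) w = 0 := by
          rw [real_inner_comm]; exact hw1
        have hwI' : @inner ℝ _ _ I w = 0 := by rw [real_inner_comm]; exact hwI
        rw [e1, e2, real_inner_smul_left, real_inner_smul_left, hw1', hwI']
        ring
      rw [hzero]; ring
    rw [hg]
    have expand : ∀ t, ‖α t + J * β t‖ ^ 2
        = ‖α t‖ ^ 2 + ‖β t‖ ^ 2 + 2 * (u * @inner ℝ _ _ (α t) (I * β t)) := by
      intro t
      rw [norm_add_sq_real, step t, norm_mul, hJnorm, one_mul]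
      ring
    rw [Finset.sum_congr rfl fun t _ => expand t, Finset.sum_add_distrib, hc, hd,
      ← Finset.mul_sum, ← Finset.mul_sum]
    ring
  refine ⟨⟨c, d, main⟩, ?_⟩
  intro J hJ
  have hJnorm : ‖J‖ = 1 := norm_of_sq_neg_one J hJ
  set u : ℝ := @inner ℝ _ _ J I with hu
  have hII : @inner ℝ _ _ I I = 1 := by
    rw [real_inner_self_eq_norm_sq, hInorm]; norm_num
  have hJ1 : @inner ℝ _ _ J (1 : Quaternion ℝ) = 0 := by
    rw [Quaternion.inner_def]
    simp [re_of_sq_neg_one J hJ]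
  have hI1 : @inner ℝ _ _ I (1 : Quaternion ℝ) = 0 := by
    rw [Quaternion.inner_def]
    simp [re_of_sq_neg_one I hI]
  have hgJ : g J = c - d * u := by
    apply main J (J - u • I) u hJ (by abel)
    · rw [inner_sub_left, real_inner_smul_left, hJ1, hI1]; ring
    · rw [inner_sub_left, real_inner_smul_left, hII, hu]; ring
  have hgI : g I = c - d := by
    have := main I 0 1 hI (by simp) (by simp) (by simp)
    simpa using this
  have hgnI : g (-I) = c + d := by
    have h2 : (-I) ^ 2 = -1 := by rw [neg_pow, hI]; norm_num
    have := main (-I) 0 (-1) h2 (by simp) (by simp) (by simp)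
    rw [this]; ring
  have hub : |u| ≤ 1 := by
    have := abs_real_inner_le_norm J I
    rwa [hJnorm, hInorm, one_mul] at this
  obtain ⟨hu1, hu2⟩ := abs_le.mp hub
  rw [hgJ, hgI, hgnI]
  rcases le_total 0 d with hd0 | hd0
  · constructor
    · exact le_max_of_le_right (by nlinarith)
    · exact le_trans (min_le_left _ _) (by nlinarith)
  · constructor
    · exact le_max_of_le_left (by nlinarith)
    · exact le_trans (min_le_right _ _) (by nlinarith)
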